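/- Let f : (0,∞) → [0,∞) be locally integrable with ∫_0^∞ f ≤ 1 and let M : [0,1] → ℝ be continuous. Define Λ(t) = ∫_0^t f(t-s) M(s) ds. If f is nonincreasing, then for all 0 ≤ s ≤ t ≤ 1 with t - s ≤ δ: |Λ(t) - Λ(s)| ≤ 2 (∫_0^δ f(u) du) · sup_{u ≤ 1} |M(u)|. -/
import Mathlib


open MeasureTheory

/-- Modulus-of-continuity estimate: for a nonincreasing kernel `f ≥ 0` with
`∫_0^∞ f ≤ 1`, a continuous `M` on `[0,1]` bounded by `K`, and
`Λ(t) = ∫_0^t f(t-s) M(s) ds`, one has for `0 ≤ s ≤ t ≤ 1` with `t - s ≤ δ`: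
`|Λ(t) - Λ(s)| ≤ 2 (∫_0^δ f) · K`. -/
theorem stmt15 (f M : ℝ → ℝ) (δ K : ℝ)
    (hf0 : ∀ x : ℝ, 0 < x → 0 ≤ f x)
    (hfint : IntegrableOn f (Set.Ioi 0))
    (hf1 : (∫ x in Set.Ioi (0 : ℝ), f x) ≤ 1)
    (hmono : AntitoneOn f (Set.Ioi 0))
    (hM : ContinuousOn M (Set.Icc 0 1))
    (hK : ∀ u ∈ Set.Icc (0 : ℝ) 1, |M u| ≤ K)
    (hδ : 0 < δ) :
    ∀ s t : ℝ, 0 ≤ s → s ≤ t → t ≤ 1 → t - s ≤ δ →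
      |(∫ u in (0 : ℝ)..t, f (t - u) * M u) - ∫ u in (0 : ℝ)..s, f (s - u) * M u|
        ≤ 2 * (∫ u in (0 : ℝ)..δ, f u) * K := by
  intro s t hs hst ht1 hts
  have ht0 : 0 ≤ t := hs.trans hst
  have hts0 : 0 ≤ t - s := sub_nonneg.mpr hst
  have hK0 : 0 ≤ K := le_trans (abs_nonneg _) (hK 0 ⟨le_refl 0, zero_le_one⟩)
  -- a.e. avoidance of a point
  have hne : ∀ (c : ℝ) (S : Set ℝ), ∀ᵐ u ∂(volume.restrict S), u ≠ c := by
    intro c S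
    refine ae_restrict_of_ae ?_
    have h : {u : ℝ | ¬ u ≠ c} = {c} := by ext u; simp
    rw [ae_iff, h]
    exact measure_singleton c
  -- integrability of f on nonneg intervals
  have hfi : ∀ a b : ℝ, 0 ≤ a → 0 ≤ b → IntervalIntegrable f volume a b := by
    intro a b ha hb
    rw [intervalIntegrable_iff]
    exact hfint.mono_set fun x hx => lt_of_le_of_lt (le_min ha hb) hx.1
  -- integrability of f (c - ·)
  have hfc : ∀ (c a b : ℝ), 0 ≤ a → a ≤ c → 0 ≤ b → b ≤ c →
      IntervalIntegrable (fun u => f (c - u)) volume a b := by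
    intro c a b ha hac hb hbc
    have := (hfi (c - a) (c - b) (by linarith) (by linarith)).comp_sub_left c
    simpa [sub_sub_cancel] using this
  -- continuity of M on subintervals
  have hMc : ∀ a b : ℝ, 0 ≤ a → a ≤ 1 → 0 ≤ b → b ≤ 1 → ContinuousOn M (Set.uIcc a b) := by
    intro a b ha ha1 hb hb1
    exact hM.mono (Set.uIcc_subset_Icc ⟨ha, ha1⟩ ⟨hb, hb1⟩)
  -- product integrability
  have hFt : ∀ a b : ℝ, 0 ≤ a → a ≤ t → 0 ≤ b → b ≤ t →
      IntervalIntegrable (fun u => f (t - u) * M u) volume a b := fun a b ha hat hb hbt =>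
    (hfc t a b ha hat hb hbt).mul_continuousOn
      (hMc a b ha (hat.trans ht1) hb (hbt.trans ht1))
  have hFs : ∀ a b : ℝ, 0 ≤ a → a ≤ s → 0 ≤ b → b ≤ s →
      IntervalIntegrable (fun u => f (s - u) * M u) volume a b := fun a b ha has hb hbs =>
    (hfc s a b ha has hb hbs).mul_continuousOn
      (hMc a b ha (has.trans (hst.trans ht1)) hb (hbs.trans (hst.trans ht1)))
  -- nonnegativity of interval integrals of f
  have hnn : ∀ a b : ℝ, 0 ≤ a → a ≤ b → 0 ≤ ∫ u in a..b, f u := by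
    intro a b ha hab
    apply intervalIntegral.integral_nonneg_of_ae_restrict hab
    filter_upwards [ae_restrict_mem measurableSet_Icc, hne a (Set.Icc a b)] with u hu hua
    exact hf0 u (lt_of_le_of_lt ha (lt_of_le_of_ne hu.1 (Ne.symm hua)))
  -- splitting
  have hsplit : (∫ u in (0 : ℝ)..t, f (t - u) * M u) - ∫ u in (0 : ℝ)..s, f (s - u) * M u
      = (∫ u in s..t, f (t - u) * M u)
        + ∫ u in (0 : ℝ)..s, (f (t - u) - f (s - u)) * M u := by
    have h1 : (∫ u in (0 : ℝ)..s, f (t - u) * M u) + ∫ u in s..t, f (t - u) * M u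
        = ∫ u in (0 : ℝ)..t, f (t - u) * M u :=
      intervalIntegral.integral_add_adjacent_intervals
        (hFt 0 s le_rfl ht0 hs hst) (hFt s t hs hst ht0 le_rfl)
    have h2 : ∫ u in (0 : ℝ)..s, (f (t - u) - f (s - u)) * M u
        = (∫ u in (0 : ℝ)..s, f (t - u) * M u) - ∫ u in (0 : ℝ)..s, f (s - u) * M u := by
      rw [← intervalIntegral.integral_sub (hFt 0 s le_rfl ht0 hs hst)
        (hFs 0 s le_rfl hs hs le_rfl)]
      congr 1
      ext u
      ring
    linarith
  -- bound for the first term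
  have hb1 : |∫ u in s..t, f (t - u) * M u| ≤ (∫ u in (0 : ℝ)..(t - s), f u) * K := by
    have hcomp : (∫ u in s..t, f (t - u)) = ∫ u in (0 : ℝ)..(t - s), f u := by
      have := intervalIntegral.integral_comp_sub_left (a := s) (b := t) f t
      rwa [sub_self] at this
    calc |∫ u in s..t, f (t - u) * M u| ≤ ∫ u in s..t, |f (t - u) * M u| :=
          intervalIntegral.abs_integral_le_integral_abs hst
      _ ≤ ∫ u in s..t, f (t - u) * K := by
          apply intervalIntegral.integral_mono_ae_restrict hst
            (hFt s t hs hst ht0 le_rfl).abs ((hfc t s t hs hst ht0 le_rfl).mul_const K)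
          filter_upwards [ae_restrict_mem measurableSet_Icc, hne t (Set.Icc s t)] with u hu hut
          have h1 : 0 < t - u := by
            rcases lt_or_eq_of_le hu.2 with h | h
            · linarith
            · exact absurd h hut
          rw [abs_mul, abs_of_nonneg (hf0 _ h1)]
          exact mul_le_mul_of_nonneg_left (hK u ⟨hs.trans hu.1, hu.2.trans ht1⟩) (hf0 _ h1)
      _ = (∫ u in s..t, f (t - u)) * K := intervalIntegral.integral_mul_const K _
      _ = (∫ u in (0 : ℝ)..(t - s), f u) * K := by rw [hcomp]
  -- bound for the second term
  have hb2 : |∫ u in (0 : ℝ)..s, (f (t - u) - f (s - u)) * M u|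
      ≤ ((∫ u in (0 : ℝ)..s, f u) - ∫ u in (t - s)..t, f u) * K := by
    have hcomp1 : (∫ u in (0 : ℝ)..s, f (s - u)) = ∫ u in (0 : ℝ)..s, f u := by
      have := intervalIntegral.integral_comp_sub_left (a := (0 : ℝ)) (b := s) f s
      rwa [sub_zero, sub_self] at this
    have hcomp2 : (∫ u in (0 : ℝ)..s, f (t - u)) = ∫ u in (t - s)..t, f u := by
      have := intervalIntegral.integral_comp_sub_left (a := (0 : ℝ)) (b := s) f t
      rwa [sub_zero] at this
    calc |∫ u in (0 : ℝ)..s, (f (t - u) - f (s - u)) * M u|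
        ≤ ∫ u in (0 : ℝ)..s, |(f (t - u) - f (s - u)) * M u| :=
          intervalIntegral.abs_integral_le_integral_abs hs
      _ ≤ ∫ u in (0 : ℝ)..s, (f (s - u) - f (t - u)) * K := by
          simp only [sub_mul]
          apply intervalIntegral.integral_mono_ae_restrict hs
            ((hFt 0 s le_rfl ht0 hs hst).sub (hFs 0 s le_rfl hs hs le_rfl)).abs
            (((hfc s 0 s le_rfl hs hs le_rfl).mul_const K).sub
              ((hfc t 0 s le_rfl ht0 hs hst).mul_const K))
          filter_upwards [ae_restrict_mem measurableSet_Icc, hne s (Set.Icc 0 s)] with u hu hus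
          have h1 : 0 < s - u := by
            rcases lt_or_eq_of_le hu.2 with h | h
            · linarith
            · exact absurd h hus
          have h2 : 0 < t - u := by linarith
          have hle : f (t - u) ≤ f (s - u) :=
            hmono (Set.mem_Ioi.mpr h1) (Set.mem_Ioi.mpr h2) (by linarith)
          rw [← sub_mul, abs_mul, abs_of_nonpos (by linarith : f (t - u) - f (s - u) ≤ 0)]
          have hMu : |M u| ≤ K := hK u ⟨hu.1, hu.2.trans (hst.trans ht1)⟩
          have hexp : -(f (t - u) - f (s - u)) = f (s - u) - f (t - u) := by ring
          rw [hexp, show f (s - u) * K - f (t - u) * K = (f (s - u) - f (t - u)) * K from by ring]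
          exact mul_le_mul_of_nonneg_left hMu (by linarith)
      _ = ((∫ u in (0 : ℝ)..s, f u) - ∫ u in (t - s)..t, f u) * K := by
          rw [intervalIntegral.integral_mul_const, intervalIntegral.integral_sub
            (hfc s 0 s le_rfl hs hs le_rfl) (hfc t 0 s le_rfl ht0 hs hst),
            hcomp1, hcomp2]
  -- rearrangement: ∫_0^s f - ∫_{t-s}^t f = ∫_0^{t-s} f - ∫_s^t f
  have hadd1 : (∫ u in (0 : ℝ)..(t - s), f u) + ∫ u in (t - s)..s, f u
      = ∫ u in (0 : ℝ)..s, f u :=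
    intervalIntegral.integral_add_adjacent_intervals (hfi 0 (t - s) le_rfl hts0)
      (hfi (t - s) s hts0 hs)
  have hadd2 : (∫ u in (t - s)..s, f u) + ∫ u in s..t, f u = ∫ u in (t - s)..t, f u :=
    intervalIntegral.integral_add_adjacent_intervals (hfi (t - s) s hts0 hs)
      (hfi s t hs ht0)
  have hst_nn : 0 ≤ ∫ u in s..t, f u := hnn s t hs hst
  -- ∫_0^{t-s} f ≤ ∫_0^δ f
  have haddδ : (∫ u in (0 : ℝ)..(t - s), f u) + ∫ u in (t - s)..δ, f u
      = ∫ u in (0 : ℝ)..δ, f u :=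
    intervalIntegral.integral_add_adjacent_intervals (hfi 0 (t - s) le_rfl hts0)
      (hfi (t - s) δ hts0 hδ.le)
  have hδ_nn : 0 ≤ ∫ u in (t - s)..δ, f u := hnn (t - s) δ hts0 hts
  have hIle : (∫ u in (0 : ℝ)..(t - s), f u) ≤ ∫ u in (0 : ℝ)..δ, f u := by linarith
  have hI_nn : 0 ≤ ∫ u in (0 : ℝ)..(t - s), f u := hnn 0 (t - s) le_rfl hts0
  -- combine
  have key1 : (∫ u in (0 : ℝ)..(t - s), f u) * K ≤ (∫ u in (0 : ℝ)..δ, f u) * K :=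
    mul_le_mul_of_nonneg_right hIle hK0
  have key2 : ((∫ u in (0 : ℝ)..s, f u) - ∫ u in (t - s)..t, f u) * K
      ≤ (∫ u in (0 : ℝ)..δ, f u) * K := by
    apply mul_le_mul_of_nonneg_right _ hK0
    linarith
  calc |(∫ u in (0 : ℝ)..t, f (t - u) * M u) - ∫ u in (0 : ℝ)..s, f (s - u) * M u|
      ≤ |∫ u in s..t, f (t - u) * M u|
        + |∫ u in (0 : ℝ)..s, (f (t - u) - f (s - u)) * M u| := by
        rw [hsplit]; exact abs_add_le _ _
    _ ≤ 2 * (∫ u in (0 : ℝ)..δ, f u) * K := by linarith
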